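/- Let n be a nonzero real number and define K on the open set U = {(x, y) ∈ ℝ² : |y| < x} by K(x, y) = sgn(n)·xⁿ/(x² − y²)ⁿ. Then at every point of U, −∂K/∂x > |∂K/∂y|; explicitly, ∂K/∂x = −|n|·x^{n−1}(x² + y²)/(x² − y²)^{n+1} and ∂K/∂y = 2|n|·y·xⁿ/(x² − y²)^{n+1}. -/

import Mathlib

set_option maxHeartbeats 1000000


/-- Partial derivative with respect to the first variable. -/
noncomputable def pdx (f : ℝ × ℝ → ℝ) (p : ℝ × ℝ) : ℝ := fderiv ℝ f p (1, 0)

/-- Partial derivative with respect to the second variable. -/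
noncomputable def pdy (f : ℝ × ℝ → ℝ) (p : ℝ × ℝ) : ℝ := fderiv ℝ f p (0, 1)

/-- Parabolicity of powers of mean curvature flow `K = sgn(n)·xⁿ/(x²−y²)ⁿ` on
`U = {(x,y) : |y| < x}`, with the explicit partial derivatives. -/
theorem powers_of_mean_curvature_parabolic (n : ℝ) (hn : n ≠ 0)
    (K : ℝ × ℝ → ℝ)
    (hK : K = fun q : ℝ × ℝ => Real.sign n * q.1 ^ n / (q.1 ^ 2 - q.2 ^ 2) ^ n) :
    ∀ p : ℝ × ℝ, |p.2| < p.1 →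
      pdx K p = -(|n| * p.1 ^ (n - 1) * (p.1 ^ 2 + p.2 ^ 2) /
                  (p.1 ^ 2 - p.2 ^ 2) ^ (n + 1)) ∧
      pdy K p = 2 * |n| * p.2 * p.1 ^ n / (p.1 ^ 2 - p.2 ^ 2) ^ (n + 1) ∧
      |pdy K p| < -pdx K p := by
  intro p hp
  obtain ⟨x, y⟩ := p
  simp only at hp ⊢
  have hx : 0 < x := (abs_nonneg y).trans_lt hp
  have hD : 0 < x ^ 2 - y ^ 2 := by nlinarith [sq_abs y, abs_nonneg y]
  set s := Real.sign n with hs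
  open ContinuousLinearMap in
  have h1 : HasFDerivAt (fun q : ℝ × ℝ => q.1 ^ n) ((n * x ^ (n-1)) • (fst ℝ ℝ ℝ)) (x, y) :=
    (hasFDerivAt_fst (𝕜 := ℝ) (p := (x,y))).rpow_const (Or.inl hx.ne')
  open ContinuousLinearMap in
  have hx2 : HasFDerivAt (fun q : ℝ × ℝ => q.1 ^ 2) ((2*x) • (fst ℝ ℝ ℝ)) (x, y) := by
    have h := (hasFDerivAt_fst (𝕜 := ℝ) (p := ((x,y) : ℝ × ℝ))).mul
      (hasFDerivAt_fst (𝕜 := ℝ) (p := ((x,y) : ℝ × ℝ)))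
    simpa [pow_two, two_mul, add_smul, Pi.mul_def] using h
  open ContinuousLinearMap in
  have hy2 : HasFDerivAt (fun q : ℝ × ℝ => q.2 ^ 2) ((2*y) • (snd ℝ ℝ ℝ)) (x, y) := by
    have h := (hasFDerivAt_snd (𝕜 := ℝ) (p := ((x,y) : ℝ × ℝ))).mul
      (hasFDerivAt_snd (𝕜 := ℝ) (p := ((x,y) : ℝ × ℝ)))
    simpa [pow_two, two_mul, add_smul, Pi.mul_def] using h
  have hu := hx2.sub hy2
  have h2 : HasFDerivAt (fun q : ℝ × ℝ => (q.1 ^ 2 - q.2 ^ 2) ^ (-n))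
      ((-n * (x^2-y^2) ^ (-n-1)) • ((2*x) • (ContinuousLinearMap.fst ℝ ℝ ℝ) -
        (2*y) • (ContinuousLinearMap.snd ℝ ℝ ℝ))) (x, y) :=
    hu.rpow_const (Or.inl hD.ne')
  have hmul := (h1.mul h2).const_mul s
  have hev : ∀ᶠ q in nhds ((x,y) : ℝ × ℝ), 0 < q.1 ^ 2 - q.2 ^ 2 := by
    have hcont : Continuous fun q : ℝ × ℝ => q.1 ^ 2 - q.2 ^ 2 := by continuity
    exact (hcont.tendsto (x,y)).eventually (eventually_gt_nhds hD)
  have hKev : K =ᶠ[nhds ((x,y) : ℝ × ℝ)]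
      fun q : ℝ × ℝ => s * (q.1 ^ n * (q.1 ^ 2 - q.2 ^ 2) ^ (-n)) := by
    filter_upwards [hev] with q hq
    rw [hK]
    simp only
    rw [Real.rpow_neg hq.le, div_eq_mul_inv, mul_assoc]
  have hKd := hmul.congr_of_eventuallyEq hKev
  have hfd := hKd.fderiv
  -- abbreviations / scalar facts
  have hDn1 : (x^2-y^2) ^ (n+1) = (x^2-y^2) ^ n * (x^2-y^2) := Real.rpow_add_one hD.ne' n
  have hDneg1 : (x^2-y^2) ^ (-n-1) = ((x^2-y^2) ^ (n+1))⁻¹ := by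
    rw [show -n-1 = -(n+1) by ring, Real.rpow_neg hD.le]
  have hDneg : (x^2-y^2) ^ (-n) = ((x^2-y^2) ^ n)⁻¹ := Real.rpow_neg hD.le n
  have hxn : x ^ n = x ^ (n-1) * x := by
    rw [← Real.rpow_add_one hx.ne' (n-1)]; norm_num
  have hsn : s * n = |n| := by
    rcases hn.lt_or_gt with h | h
    · rw [hs, Real.sign_of_neg h, abs_of_neg h]; ring
    · rw [hs, Real.sign_of_pos h, abs_of_pos h]; ring
  have hDn_pos : 0 < (x^2-y^2) ^ n := Real.rpow_pos_of_pos hD n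
  have hDn1_pos : 0 < (x^2-y^2) ^ (n+1) := Real.rpow_pos_of_pos hD (n+1)
  have hxn1_pos : 0 < x ^ (n-1) := Real.rpow_pos_of_pos hx (n-1)
  have hnabs : 0 < |n| := abs_pos.2 hn
  have hpdx : pdx K (x, y) = -(|n| * x ^ (n - 1) * (x ^ 2 + y ^ 2) /
      (x ^ 2 - y ^ 2) ^ (n + 1)) := by
    rw [pdx, hfd]
    simp only [ContinuousLinearMap.smul_apply, ContinuousLinearMap.add_apply,
      ContinuousLinearMap.sub_apply, ContinuousLinearMap.coe_fst',
      ContinuousLinearMap.coe_snd', smul_eq_mul]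
    have hs' : s = |n| / n := by rw [eq_div_iff hn]; exact hsn
    rw [hDneg1, hDneg, hxn, hDn1, hs']
    field_simp [hn, hD.ne', hDn_pos.ne']
    ring
  have hxpn : 0 < x ^ n := Real.rpow_pos_of_pos hx n
  have hpdy : pdy K (x, y) = 2 * |n| * y * x ^ n / (x ^ 2 - y ^ 2) ^ (n + 1) := by
    rw [pdy, hfd]
    simp only [ContinuousLinearMap.smul_apply, ContinuousLinearMap.add_apply,
      ContinuousLinearMap.sub_apply, ContinuousLinearMap.coe_fst',
      ContinuousLinearMap.coe_snd', smul_eq_mul]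
    have hs' : s = |n| / n := by rw [eq_div_iff hn]; exact hsn
    rw [hDneg1, hDn1, hs']
    field_simp [hn, hD.ne', hDn_pos.ne']
    ring
  refine ⟨hpdx, hpdy, ?_⟩
  rw [hpdx, hpdy, neg_neg, abs_div, abs_of_pos hDn1_pos,
    div_lt_div_iff₀ hDn1_pos hDn1_pos]
  have habs : |2 * |n| * y * x ^ n| = 2 * |n| * |y| * x ^ n := by
    rw [abs_mul, abs_mul, abs_mul, abs_abs, abs_of_pos hxpn]
    norm_num
  rw [habs, hxn]
  have key : 2 * |y| * x < x ^ 2 + y ^ 2 := by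
    nlinarith [sq_abs y, pow_pos (sub_pos.2 hp) 2]
  nlinarith [mul_pos (mul_pos hnabs hxn1_pos) hDn1_pos, key]
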